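/- Let F be a nontrivial finite group that is not perfect (i.e., [F,F] ≠ F). Then the direct power F^ℕ (functions ℕ → F with pointwise multiplication) has countable cofinality: it is the union of a strictly increasing countable chain of proper subgroups. -/

import Mathlib

/-- A chain of proper submodules covering an infinite vector space over a finite
division ring. -/
theorem chainVS (R M : Type*) [DivisionRing R] [Finite R] [AddCommGroup M] [Module R M]
    [Infinite M] :
    ∃ W : ℕ → Submodule R M, StrictMono W ∧ (∀ n, W n ≠ ⊤) ∧ ∀ x : M, ∃ n, x ∈ W n := by
  classical
  set b := Module.Basis.ofVectorSpace R M with hb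
  haveI hι : Infinite (Module.Basis.ofVectorSpaceIndex R M) := by
    rw [← not_finite_iff_infinite]
    intro h
    haveI := Module.Finite.of_basis b
    haveI : Finite M := Module.finite_of_finite R
    exact not_finite M
  let f : ℕ ↪ Module.Basis.ofVectorSpaceIndex R M := Infinite.natEmbedding _
  let S : ℕ → Set (Module.Basis.ofVectorSpaceIndex R M) := fun n => {i | ∀ k, n ≤ k → f k ≠ i}
  have hS : Monotone S := by
    intro m n hmn i hi k hk
    exact hi k (hmn.trans hk)
  have hmemS : ∀ m n : ℕ, m < n → f m ∈ S n := by
    intro m n hmn k hk h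
    exact absurd (f.injective h) (by omega)
  have hnotS : ∀ n : ℕ, f n ∉ S n := fun n h => h n le_rfl rfl
  refine ⟨fun n => Submodule.span R (b '' S n), ?_, ?_, ?_⟩
  · intro m n hmn
    refine lt_of_le_of_ne (Submodule.span_mono (Set.image_mono (hS hmn.le))) ?_
    intro h
    dsimp only at h
    have h1 : b (f m) ∈ Submodule.span R (b '' S n) :=
      b.self_mem_span_image.2 (hmemS m n hmn)
    rw [← h] at h1
    exact hnotS m (b.self_mem_span_image.1 h1)
  · intro n h
    dsimp only at h
    have h1 : b (f n) ∈ Submodule.span R (b '' S n) := h ▸ Submodule.mem_top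
    exact hnotS n (b.self_mem_span_image.1 h1)
  · intro x
    have hfin : (f ⁻¹' ((b.repr x).support : Set (Module.Basis.ofVectorSpaceIndex R M))).Finite :=
      Set.Finite.preimage f.injective.injOn (Finset.finite_toSet _)
    obtain ⟨N, hN⟩ := hfin.bddAbove
    refine ⟨N + 1, b.mem_span_image.2 ?_⟩
    intro i hi
    intro k hk h
    have : k ∈ f ⁻¹' ((b.repr x).support : Set (Module.Basis.ofVectorSpaceIndex R M)) := by
      simpa [h] using hi
    have := hN this
    omega

/-- Koppelberg–Tits, one direction: if `F` is a nontrivial finite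
non-perfect group then `F^ℕ` has countable cofinality. -/
theorem stmt5 {F : Type*} [Group F] [Finite F] [Nontrivial F]
    (hnp : commutator F ≠ ⊤) :
    ∃ H : ℕ → Subgroup (ℕ → F), StrictMono H ∧ (∀ n, H n ≠ ⊤) ∧
      (∀ g : ℕ → F, ∃ n, g ∈ H n) := by
  classical
  -- the abelianization
  set A := Abelianization F with hA
  haveI : Finite A := Quotient.finite _
  haveI : Nontrivial A := by
    obtain ⟨x, hx⟩ : ∃ x, x ∉ commutator F := by
      by_contra h
      push_neg at h
      exact hnp ((Subgroup.eq_top_iff' _).2 h)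
    refine ⟨Abelianization.of x, 1, ?_⟩
    intro h
    exact hx ((QuotientGroup.eq_one_iff x).1 h)
  haveI : Fintype A := Fintype.ofFinite A
  set p := (Fintype.card A).minFac with hp
  haveI hpp : Fact p.Prime :=
    ⟨Nat.minFac_prime (Fintype.one_lt_card (α := A)).ne'⟩
  obtain ⟨a, ha⟩ := exists_prime_orderOf_dvd_card (G := A) p (Nat.minFac_dvd _)
  -- quotient by the subgroup of p-th powers
  set P : Subgroup A := (powMonoidHom p : A →* A).range with hP
  set Q := A ⧸ P with hQdef
  set π : A →* Q := QuotientGroup.mk' P with hπ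
  have hπsurj : Function.Surjective π := QuotientGroup.mk'_surjective P
  have hQpow : ∀ q : Q, q ^ p = 1 := by
    intro q
    obtain ⟨x, rfl⟩ := hπsurj q
    rw [← map_pow]
    exact (QuotientGroup.eq_one_iff _).2 ⟨x, rfl⟩
  haveI : Nontrivial Q := by
    have hnotinj : ¬ Function.Injective (powMonoidHom p : A →* A) := by
      intro h
      have ha1 : a ≠ 1 := by
        intro h1
        rw [h1, orderOf_one] at ha
        exact hpp.out.ne_one ha.symm
      apply ha1
      apply h
      show a ^ p = 1 ^ p
      rw [one_pow, ← ha, pow_orderOf_eq_one]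
    have hnotsurj : ¬ Function.Surjective (powMonoidHom p : A →* A) := by
      rwa [← Finite.injective_iff_surjective]
    rw [Function.Surjective] at hnotsurj
    push_neg at hnotsurj
    obtain ⟨y, hy⟩ := hnotsurj
    refine ⟨π y, 1, ?_⟩
    intro h
    obtain ⟨x, hx⟩ := (QuotientGroup.eq_one_iff y).1 h
    exact hy x hx
  -- surjection F^ℕ → Q^ℕ
  set ψ : F →* Q := π.comp Abelianization.of with hψdef
  have hψsurj : Function.Surjective ψ := by
    intro q
    obtain ⟨x, rfl⟩ := hπsurj q
    obtain ⟨y, rfl⟩ := Quotient.exists_rep x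
    exact ⟨y, rfl⟩
  set φ : (ℕ → F) →* (ℕ → Q) :=
    { toFun := fun g n => ψ (g n)
      map_one' := by funext n; simp
      map_mul' := fun x y => by funext n; simp } with hφdef
  have hφsurj : Function.Surjective φ := by
    intro v
    refine ⟨fun n => (hψsurj (v n)).choose, funext fun n => (hψsurj (v n)).choose_spec⟩
  -- vector space structure on Additive (ℕ → Q)
  haveI : Module (ZMod p) (Additive (ℕ → Q)) := by
    refine AddCommGroup.zmodModule ?_
    intro x
    show Additive.ofMul ((Additive.toMul x) ^ p) = (0 : Additive (ℕ → Q))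
    have : (Additive.toMul x) ^ p = (1 : ℕ → Q) := funext fun n => hQpow _
    rw [this]; rfl
  haveI : Infinite (ℕ → Q) := Pi.infinite_of_left
  haveI : Infinite (Additive (ℕ → Q)) := ‹Infinite (ℕ → Q)›
  obtain ⟨W, hWmono, hWtop, hWcover⟩ := chainVS (ZMod p) (Additive (ℕ → Q))
  -- transport to subgroups of ℕ → Q and pull back along φ
  set K : ℕ → Subgroup (ℕ → Q) := fun n => AddSubgroup.toSubgroup' (W n).toAddSubgroup with hK
  have hKmem : ∀ n (y : ℕ → Q), y ∈ K n ↔ Additive.ofMul y ∈ W n := fun n y => Iff.rfl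
  refine ⟨fun n => (K n).comap φ, ?_, ?_, ?_⟩
  · intro m n hmn
    have hlt : W m < W n := hWmono hmn
    refine lt_of_le_of_ne ?_ ?_
    · intro g hg
      rw [Subgroup.mem_comap, hKmem] at hg ⊢
      exact hlt.le hg
    · obtain ⟨y, hyn, hym⟩ := SetLike.exists_of_lt hlt
      obtain ⟨g, hg⟩ := hφsurj (Additive.toMul y)
      intro h
      dsimp only at h
      have h1 : g ∈ (K n).comap φ := by
        rw [Subgroup.mem_comap, hKmem, hg]
        exact hyn
      have h2 : g ∉ (K m).comap φ := by
        rw [Subgroup.mem_comap, hKmem, hg]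
        exact hym
      rw [h] at h2
      exact h2 h1
  · intro n h
    dsimp only at h
    apply hWtop n
    rw [eq_top_iff]
    intro y _
    obtain ⟨g, hg⟩ := hφsurj (Additive.toMul y)
    have : g ∈ (K n).comap φ := h ▸ Subgroup.mem_top g
    rw [Subgroup.mem_comap, hKmem, hg] at this
    exact this
  · intro g
    obtain ⟨n, hn⟩ := hWcover (Additive.ofMul (φ g))
    exact ⟨n, by rw [Subgroup.mem_comap, hKmem]; exact hn⟩
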